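/- Let f be analytic on the open unit disc 𝔻 with f' never zero, and suppose Re(1 + z f''(z)/f'(z)) > 0 for all z ∈ 𝔻. Fix θ, γ ∈ ℝ and n ∈ ℕ, n ≥ 1, and define R on 𝔻 by R'(z) = f'(z)/(1 + e^{i(θ-2γ)} z^n). Then Re(n + 2 + 2 z R''(z)/R'(z)) > 0 for all z ∈ 𝔻. -/

import Mathlib

open Metric Complex in
theorem stmt_6 (f f' f'' R'' : ℂ → ℂ) (θ γ : ℝ) (n : ℕ) (hn : 1 ≤ n)
    (hf' : ∀ z ∈ ball (0 : ℂ) 1, HasDerivAt f (f' z) z)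
    (hf'' : ∀ z ∈ ball (0 : ℂ) 1, HasDerivAt f' (f'' z) z)
    (hf'ne : ∀ z ∈ ball (0 : ℂ) 1, f' z ≠ 0)
    (hre : ∀ z ∈ ball (0 : ℂ) 1, (1 + z * f'' z / f' z).re > 0)
    (hR'' : ∀ z ∈ ball (0 : ℂ) 1,
      HasDerivAt (fun w => f' w / (1 + Complex.exp ((θ - 2 * γ) * Complex.I) * w ^ n))
        (R'' z) z) :
    ∀ z ∈ ball (0 : ℂ) 1,
      ((n : ℂ) + 2 + 2 * z * R'' z /
        (f' z / (1 + Complex.exp ((θ - 2 * γ) * Complex.I) * z ^ n))).re > 0 := by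
  intro z hz
  set c : ℂ := Complex.exp ((θ - 2 * γ) * Complex.I) with hc
  have hcabs : ‖c‖ = 1 := by
    rw [hc, Complex.norm_exp]
    simp
  have hzlt : ‖z‖ < 1 := by simpa [Complex.dist_eq] using hz
  set w : ℂ := c * z ^ n with hw
  have hwlt : ‖w‖ < 1 := by
    rw [hw, norm_mul, hcabs, one_mul, norm_pow]
    calc ‖z‖ ^ n ≤ ‖z‖ ^ 1 :=
          pow_le_pow_of_le_one (norm_nonneg z) hzlt.le hn
      _ < 1 := by simpa using hzlt
  have hdne : (1 : ℂ) + w ≠ 0 := by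
    intro h
    have : w = -1 := by linear_combination h
    rw [this] at hwlt
    simp at hwlt
  -- identify R'' z
  obtain ⟨m, rfl⟩ : ∃ m, n = m + 1 := ⟨n - 1, (Nat.succ_pred_eq_of_pos hn).symm⟩
  have hden : HasDerivAt (fun u : ℂ => 1 + c * u ^ (m + 1))
      (c * ((m + 1 : ℕ) * z ^ m)) z :=
    ((hasDerivAt_pow (m + 1) z).const_mul c).const_add 1
  have hD : HasDerivAt (fun u => f' u / (1 + c * u ^ (m + 1)))
      ((f'' z * (1 + w) - f' z * (c * ((m + 1 : ℕ) * z ^ m))) / (1 + w) ^ 2) z := by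
    have := (hf'' z hz).div hden hdne
    exact this
  have hReq : R'' z = (f'' z * (1 + w) - f' z * (c * ((m + 1 : ℕ) * z ^ m))) / (1 + w) ^ 2 :=
    (hR'' z hz).unique hD
  have hf'z := hf'ne z hz
  -- algebraic identity
  have key : ((m + 1 : ℕ) : ℂ) + 2 + 2 * z * R'' z / (f' z / (1 + w)) =
      2 * (1 + z * f'' z / f' z) + ((m + 1 : ℕ) : ℂ) * ((1 - w) / (1 + w)) := by
    have hdne' : 1 + c * z ^ (m + 1) ≠ 0 := hdne
    rw [hReq, hw]
    field_simp
    ring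
  rw [show ((m + 1 : ℕ) : ℂ) + 2 + 2 * z * R'' z /
        (f' z / (1 + Complex.exp ((θ - 2 * γ) * Complex.I) * z ^ (m + 1))) =
      ((m + 1 : ℕ) : ℂ) + 2 + 2 * z * R'' z / (f' z / (1 + w)) from by rw [hw, hc], key]
  rw [Complex.add_re]
  have h1 : (2 * (1 + z * f'' z / f' z)).re > 0 := by
    rw [show (2 : ℂ) * (1 + z * f'' z / f' z) = (1 + z * f'' z / f' z) +
      (1 + z * f'' z / f' z) from by ring, Complex.add_re]
    have := hre z hz
    linarith
  have h2 : (((m + 1 : ℕ) : ℂ) * ((1 - w) / (1 + w))).re ≥ 0 := by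
    have hre2 : ((1 - w) / (1 + w)).re ≥ 0 := by
      rw [Complex.div_re]
      have hnum : (1 - w).re * (1 + w).re + (1 - w).im * (1 + w).im
          = 1 - Complex.normSq w := by
        simp [Complex.normSq_apply, Complex.sub_re, Complex.add_re, Complex.sub_im,
          Complex.add_im]
        ring
      have hnsq : Complex.normSq w ≤ 1 := by
        have := Complex.sq_norm w
        nlinarith [hwlt, norm_nonneg w]
      have : Complex.normSq (1 + w) ≥ 0 := Complex.normSq_nonneg _
      rw [← add_div, hnum]
      exact div_nonneg (by linarith) (Complex.normSq_nonneg _)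
    have : (((m + 1 : ℕ) : ℂ) * ((1 - w) / (1 + w))).re
        = ((m + 1 : ℕ) : ℝ) * ((1 - w) / (1 + w)).re := by
      simp [Complex.mul_re]
    rw [this]
    positivity
  linarith
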